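/- Let p be a prime, P a finite p-group, and W = Ω₁(Z(P)) the subgroup generated by the central elements of order p. Let X be a nontrivial elementary abelian subgroup of P with W not contained in X. Then XW is an elementary abelian subgroup strictly containing X, and for every elementary abelian subgroup B of P with X < B, the subgroup BW is elementary abelian and is the smallest subgroup of P containing both B and XW; in particular XW is a conjunctive element of the poset of elementary abelian subgroups of P strictly containing X. -/
import Mathlib


/-- A subgroup is elementary abelian for the prime `p` if it is abelian and
every element satisfies `a ^ p = 1`. -/
def IsElementaryAbelian (p : ℕ) {G : Type*} [Group G] (A : Subgroup G) : Prop :=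
  (∀ a ∈ A, ∀ b ∈ A, Commute a b) ∧ ∀ a ∈ A, a ^ p = 1

open Pointwise in
theorem omega_center_join_conjunctive
    (p : ℕ) (hp : p.Prime) (P : Type*) [Group P] [Finite P]
    (hPp : IsPGroup p P)
    (W : Subgroup P)
    (hW : W = Subgroup.closure {x : P | x ∈ Subgroup.center P ∧ orderOf x = p})
    (X : Subgroup P) (hX : IsElementaryAbelian p X) (hXne : X ≠ ⊥)
    (hWX : ¬ W ≤ X) :
    (IsElementaryAbelian p (X ⊔ W) ∧ X < X ⊔ W) ∧
    (∀ B : Subgroup P, IsElementaryAbelian p B → X < B →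
      IsElementaryAbelian p (B ⊔ W) ∧ B ≤ B ⊔ W ∧ X ⊔ W ≤ B ⊔ W ∧
        ∀ C : Subgroup P, B ≤ C → X ⊔ W ≤ C → B ⊔ W ≤ C) ∧
    (∀ B : Subgroup P, IsElementaryAbelian p B → X < B →
      ∃ S : Subgroup P, IsElementaryAbelian p S ∧ X < S ∧
        X ⊔ W ≤ S ∧ B ≤ S ∧
        ∀ C : Subgroup P, IsElementaryAbelian p C → X < C →
          X ⊔ W ≤ C → B ≤ C → S ≤ C) := by
  -- W is contained in the center
  have hWcent : W ≤ Subgroup.center P := by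
    rw [hW]
    exact (Subgroup.closure_le _).2 fun x hx => hx.1
  -- the subgroup of central elements of exponent p
  let K : Subgroup P :=
    { carrier := {x : P | x ∈ Subgroup.center P ∧ x ^ p = 1}
      one_mem' := ⟨Subgroup.one_mem _, one_pow p⟩
      mul_mem' := by
        rintro a b ⟨ha, hap⟩ ⟨hb, hbp⟩
        refine ⟨mul_mem ha hb, ?_⟩
        have hc : Commute a b := (Subgroup.mem_center_iff.1 ha b).symm
        rw [hc.mul_pow, hap, hbp, one_mul]
      inv_mem' := by
        rintro a ⟨ha, hap⟩
        exact ⟨inv_mem ha, by rw [inv_pow, hap, inv_one]⟩ }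
  have hWK : W ≤ K := by
    rw [hW]
    exact (Subgroup.closure_le _).2 fun x hx =>
      ⟨hx.1, by rw [← hx.2]; exact pow_orderOf_eq_one x⟩
  have hWp : ∀ w ∈ W, w ^ p = 1 := fun w hw => (hWK hw).2
  haveI hWnorm : W.Normal := by
    constructor
    intro n hn g
    have h : g * n = n * g := Subgroup.mem_center_iff.1 (hWcent hn) g
    have : g * n * g⁻¹ = n := by rw [h]; group
    rwa [this]
  -- membership in B ⊔ W
  have hmem : ∀ (B : Subgroup P), ∀ x ∈ B ⊔ W, ∃ b ∈ B, ∃ w ∈ W, b * w = x := by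
    intro B x hx
    have hx' : x ∈ ((B : Set P) * (W : Set P)) := by
      rw [← Subgroup.mul_normal]; exact hx
    obtain ⟨b, hb, w, hw, rfl⟩ := hx'
    exact ⟨b, hb, w, hw, rfl⟩
  -- key lemma: joining W preserves elementary abelian
  have key : ∀ B : Subgroup P, IsElementaryAbelian p B → IsElementaryAbelian p (B ⊔ W) := by
    intro B hB
    constructor
    · intro x hx y hy
      obtain ⟨b1, hb1, w1, hw1, rfl⟩ := hmem B x hx
      obtain ⟨b2, hb2, w2, hw2, rfl⟩ := hmem B y hy
      have cw1 : ∀ z : P, Commute w1 z := fun z =>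
        (Subgroup.mem_center_iff.1 (hWcent hw1) z).symm
      have cw2 : ∀ z : P, Commute w2 z := fun z =>
        (Subgroup.mem_center_iff.1 (hWcent hw2) z).symm
      have cb : Commute b1 b2 := hB.1 b1 hb1 b2 hb2
      exact Commute.mul_left (cb.mul_right (cw2 b1).symm) (cw1 (b2 * w2))
    · intro x hx
      obtain ⟨b, hb, w, hw, rfl⟩ := hmem B x hx
      have cbw : Commute b w := (Subgroup.mem_center_iff.1 (hWcent hw) b)
      rw [cbw.mul_pow, hB.2 b hb, hWp w hw, one_mul]
  have hXltXW : X < X ⊔ W :=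
    lt_of_le_of_ne le_sup_left (fun h => hWX (le_sup_right.trans h.ge))
  refine ⟨⟨key X hX, hXltXW⟩, ?_, ?_⟩
  · intro B hB hXB
    refine ⟨key B hB, le_sup_left, sup_le_sup_right hXB.le W, ?_⟩
    intro C hBC hXWC
    exact sup_le hBC (le_sup_right.trans hXWC)
  · intro B hB hXB
    refine ⟨B ⊔ W, key B hB, lt_of_lt_of_le hXB le_sup_left,
      sup_le_sup_right hXB.le W, le_sup_left, ?_⟩
    intro C _ _ hXWC hBC
    exact sup_le hBC (le_sup_right.trans hXWC)
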